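/- Let d ≥ 1 and let H be a bounded self-adjoint operator on ℓ²(ℤ^d; ℂ). Let (ψ_s)_{s∈S} be an orthonormal (Hilbert) basis of ℓ²(ℤ^d;ℂ) indexed by a countable set S such that each ψ_s is an eigenfunction of H: Hψ_s = μ_s ψ_s with μ_s ∈ ℝ. Let p : S → ℤ^d be an arbitrary function. Then for every t ∈ ℝ and all x, y ∈ ℤ^d, |⟨e^{itH} δ_x, δ_y⟩| ≤ Σ_{q ∈ ℤ^d} ( Σ_{s ∈ S, p(s) = q} |ψ_s(x)|² · Σ_{s ∈ S, p(s) = q} |ψ_s(y)|² )^{1/2}, where the sums are taken in [0, ∞], δ_x denotes the standard basis vector of ℓ²(ℤ^d;ℂ) at site x, and e^{itH} is the exponential of the bounded operator itH. -/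

import Mathlib

open scoped BigOperators ENNReal

/-- The ℓ¹ norm of a lattice point `x ∈ ℤ^d`, as a real number. -/
noncomputable def norm1 {d : ℕ} (x : Fin d → ℤ) : ℝ := ∑ i, |(x i : ℝ)|

/-- The Hilbert space `ℓ²(ℤ^d; ℂ)`. -/
noncomputable abbrev L2Z (d : ℕ) := lp (fun _ : Fin d → ℤ => ℂ) 2

/-- exp of a bounded operator acts on eigenvectors as exp of eigenvalue. -/
lemma exp_apply_eigenvector {E : Type*} [NormedAddCommGroup E] [NormedSpace ℂ E]
    [CompleteSpace E] (A : E →L[ℂ] E) (c : ℂ) (v : E) (h : A v = c • v) :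
    NormedSpace.exp A v = NormedSpace.exp c • v := by
  have hpow : ∀ n : ℕ, (A ^ n) v = c ^ n • v := by
    intro n
    induction n with
    | zero => simp
    | succ n ih =>
      rw [pow_succ, pow_succ, ContinuousLinearMap.mul_apply, h, map_smul, ih, smul_smul,
        mul_comm]
  have hs : HasSum (fun n : ℕ => ((Nat.factorial n : ℂ))⁻¹ • A ^ n) (NormedSpace.exp A) := by
    rw [NormedSpace.exp_eq_tsum (𝕂 := ℂ)]
    exact (NormedSpace.expSeries_summable' A).hasSum
  have hs2 : HasSum (fun n : ℕ => (((Nat.factorial n : ℂ))⁻¹ • A ^ n) v) (NormedSpace.exp A v) :=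
    hs.mapL (ContinuousLinearMap.apply ℂ E v)
  have hs2' : HasSum (fun n : ℕ => (((Nat.factorial n : ℂ))⁻¹ * c ^ n) • v) (NormedSpace.exp A v) := by
    refine hs2.congr_fun fun n => ?_
    rw [ContinuousLinearMap.smul_apply, hpow n, smul_smul]
  have hs3 : HasSum (fun n : ℕ => (((Nat.factorial n : ℂ))⁻¹ * c ^ n) • v) (NormedSpace.exp c • v) := by
    have h4 : HasSum (fun n : ℕ => ((Nat.factorial n : ℂ))⁻¹ • c ^ n) (NormedSpace.exp c) := by
      rw [NormedSpace.exp_eq_tsum (𝕂 := ℂ)]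
      exact (NormedSpace.expSeries_summable' c).hasSum
    simpa [smul_eq_mul] using h4.smul_const v
  exact hs2'.unique hs3

/-- The ℝ≥0∞-valued norm bound for the sum of a convergent series. -/
lemma ennnorm_le_tsum_of_hasSum {ι : Type*} {f : ι → ℂ} {a : ℂ} (h : HasSum f a) :
    (‖a‖₊ : ℝ≥0∞) ≤ ∑' i, (‖f i‖₊ : ℝ≥0∞) := by
  by_cases ht : ∑' i, (‖f i‖₊ : ℝ≥0∞) = ⊤
  · simp [ht]
  · have hsum : Summable fun i => ‖f i‖₊ := ENNReal.tsum_coe_ne_top_iff_summable.mp ht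
    rw [← ENNReal.coe_tsum hsum, ENNReal.coe_le_coe, ← h.tsum_eq]
    exact nnnorm_tsum_le hsum

/-- Cauchy–Schwarz for `ℝ≥0∞`-valued tsums over a countable type. -/
lemma tsum_mul_le_sqrt_mul_sqrt {ι : Type*} [Countable ι] (f g : ι → ℝ≥0∞) :
    ∑' i, f i * g i ≤ ((∑' i, f i ^ 2) * (∑' i, g i ^ 2)) ^ ((1 : ℝ) / 2) := by
  letI : MeasurableSpace ι := ⊤
  haveI : MeasurableSingletonClass ι := ⟨fun _ => trivial⟩
  have hpq : Real.HolderConjugate 2 2 := Real.HolderConjugate.two_two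
  have h := ENNReal.lintegral_mul_le_Lp_mul_Lq (MeasureTheory.Measure.count (α := ι)) hpq
    (f := f) (g := g) measurable_from_top.aemeasurable measurable_from_top.aemeasurable
  rw [MeasureTheory.lintegral_count, MeasureTheory.lintegral_count,
    MeasureTheory.lintegral_count] at h
  have hr : ∀ u : ι → ℝ≥0∞, ∑' i, u i ^ (2 : ℝ) = ∑' i, u i ^ 2 := fun u =>
    tsum_congr fun i => by
      rw [show ((2 : ℝ)) = ((2 : ℕ) : ℝ) by norm_num, ENNReal.rpow_natCast]
  calc ∑' i, f i * g i ≤ (∑' i, f i ^ (2 : ℝ)) ^ ((1:ℝ)/2) * (∑' i, g i ^ (2 : ℝ)) ^ ((1:ℝ)/2) := h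
    _ = (∑' i, f i ^ 2) ^ ((1:ℝ)/2) * (∑' i, g i ^ 2) ^ ((1:ℝ)/2) := by rw [hr f, hr g]
    _ = ((∑' i, f i ^ 2) * (∑' i, g i ^ 2)) ^ ((1 : ℝ) / 2) :=
        (ENNReal.mul_rpow_of_nonneg _ _ (by norm_num : (0:ℝ) ≤ 1/2)).symm

/-- **Cauchy–Schwarz bound for the unitary group kernel** (Lemma 5.6 / [JK13, Thm 2.1]):
for a bounded self-adjoint `H` with an orthonormal eigenbasis `(ψ_s)` and any assignment
`p : S → ℤ^d`,
`|⟨e^{itH} δ_x, δ_y⟩| ≤ ∑_q (∑_{p(s)=q} |ψ_s(x)|² ⋅ ∑_{p(s)=q} |ψ_s(y)|²)^{1/2}`. -/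
theorem unitary_kernel_bound_via_eigenbasis
    (d : ℕ) (hd : 1 ≤ d)
    (H : L2Z d →L[ℂ] L2Z d) (hH : IsSelfAdjoint H)
    (S : Type) [Countable S] (b : HilbertBasis S ℂ (L2Z d)) (μ : S → ℝ)
    (heig : ∀ s : S, H (b s) = (μ s : ℂ) • b s)
    (p : S → Fin d → ℤ) (t : ℝ) (x y : Fin d → ℤ) :
    (‖(inner ℂ (NormedSpace.exp (((t : ℂ) * Complex.I) • H) (lp.single 2 x (1 : ℂ)))
        (lp.single 2 y (1 : ℂ)) : ℂ)‖₊ : ℝ≥0∞)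
      ≤ ∑' q : Fin d → ℤ,
          ((∑' s : {s : S // p s = q}, (‖(b s.1 : ∀ _ : Fin d → ℤ, ℂ) x‖₊ : ℝ≥0∞) ^ 2) *
            (∑' s : {s : S // p s = q}, (‖(b s.1 : ∀ _ : Fin d → ℤ, ℂ) y‖₊ : ℝ≥0∞) ^ 2))
            ^ ((1 : ℝ) / 2) := by
  classical
  set δx : L2Z d := lp.single 2 x (1 : ℂ) with hδx
  set δy : L2Z d := lp.single 2 y (1 : ℂ) with hδy
  set U : L2Z d →L[ℂ] L2Z d := NormedSpace.exp (((t : ℂ) * Complex.I) • H) with hU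
  -- eigenvalue action of U
  have hUb : ∀ s : S, U (b s) =
      NormedSpace.exp (((t : ℂ) * Complex.I) * (μ s : ℂ)) • b s := by
    intro s
    refine exp_apply_eigenvector _ _ _ ?_
    rw [ContinuousLinearMap.smul_apply, heig s, smul_smul]
  -- expansion of ⟪δy, U δx⟫
  have h1 : HasSum (fun s : S => (inner ℂ (b s) δx : ℂ) • b s) δx := by
    have h0 := b.hasSum_repr δx
    have he : (fun s : S => b.repr δx s • b s) = fun s : S => (inner ℂ (b s) δx : ℂ) • b s := by
      funext s
      rw [b.repr_apply_apply]
    rwa [he] at h0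
  have h2 : HasSum
      (fun s : S => (inner ℂ (b s) δx : ℂ) *
        (NormedSpace.exp (((t : ℂ) * Complex.I) * (μ s : ℂ)) * (inner ℂ δy (b s) : ℂ)))
      (inner ℂ δy (U δx) : ℂ) := by
    have h2' := h1.mapL ((innerSL ℂ δy).comp U)
    refine h2'.congr_fun fun s => ?_
    simp only [ContinuousLinearMap.coe_comp', Function.comp_apply, map_smul, hUb s,
      innerSL_apply_apply, inner_smul_right, smul_eq_mul] <;> ring
  -- norm bound from the expansion
  have key : (‖(inner ℂ (U δx) δy : ℂ)‖₊ : ℝ≥0∞)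
      ≤ ∑' s : S, (‖(b s : ∀ _ : Fin d → ℤ, ℂ) x‖₊ : ℝ≥0∞) *
          (‖(b s : ∀ _ : Fin d → ℤ, ℂ) y‖₊ : ℝ≥0∞) := by
    have hnorm : (‖(inner ℂ (U δx) δy : ℂ)‖₊ : ℝ≥0∞) = ‖(inner ℂ δy (U δx) : ℂ)‖₊ := by
      rw [← inner_conj_symm (U δx) δy, RCLike.nnnorm_conj]
    rw [hnorm]
    refine (ennnorm_le_tsum_of_hasSum h2).trans_eq (tsum_congr fun s => ?_)
    have hexp : ‖NormedSpace.exp (((t : ℂ) * Complex.I) * (μ s : ℂ))‖₊ = 1 := by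
      have : ‖Complex.exp (((t : ℂ) * Complex.I) * (μ s : ℂ))‖ = 1 := by
        rw [Complex.norm_exp]
        simp [Complex.mul_re, Complex.mul_im]
      rw [← Complex.exp_eq_exp_ℂ]
      ext; simpa using this
    have hx' : (inner ℂ (b s) δx : ℂ) = (starRingEnd ℂ) ((b s : ∀ _ : Fin d → ℤ, ℂ) x) := by
      rw [hδx, lp.inner_single_right]
      simp [RCLike.inner_apply]
    have hy' : (inner ℂ δy (b s) : ℂ) = (b s : ∀ _ : Fin d → ℤ, ℂ) y := by
      rw [hδy, lp.inner_single_left]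
      simp [RCLike.inner_apply]
    rw [hx', hy']
    push_cast
    rw [nnnorm_mul, nnnorm_mul, hexp, RCLike.nnnorm_conj]
    push_cast
    ring
  refine key.trans ?_
  -- split the sum over fibers of p
  have hfib := ENNReal.tsum_fiberwise
    (fun s : S => (‖(b s : ∀ _ : Fin d → ℤ, ℂ) x‖₊ : ℝ≥0∞) *
        (‖(b s : ∀ _ : Fin d → ℤ, ℂ) y‖₊ : ℝ≥0∞)) p
  rw [← hfib]
  refine ENNReal.tsum_le_tsum fun q => ?_
  exact tsum_mul_le_sqrt_mul_sqrt
    (fun s : p ⁻¹' {q} => (‖(b s.1 : ∀ _ : Fin d → ℤ, ℂ) x‖₊ : ℝ≥0∞))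
    (fun s : p ⁻¹' {q} => (‖(b s.1 : ∀ _ : Fin d → ℤ, ℂ) y‖₊ : ℝ≥0∞))
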